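/- Fix N ≥ 1 and δ ∈ {1, −1}. Let A, T be invertible N×N complex matrices with A⁻¹T = T·A* and T·T* = δ·Iₙ (* denoting entrywise complex conjugation). Let q : ℤ × ℝ → ℂ be differentiable in t and β : ℤ × ℝ → ℝ \ {0} be real-valued with β² = 1 − δ|q|². Suppose Φ : ℤ × ℝ → ℂᴺ is differentiable in t and satisfies the reduced system Φ(n+1,t) = β(n,t)⁻¹·A·Φ(n,t) + β(n,t)⁻¹·q(n,t)·T·conj(Φ(n,t)) and 2∂ₜΦ(n,t) = (A² − A⁻² − δ·q(n,t)·conj(q(n−1,t)) + δ·q(n−1,t)·conj(q(n,t)))·Φ(n,t) + 2(q(n,t)·A + q(n−1,t)·A⁻¹)·T·conj(Φ(n,t)). Then the pair (Φ, Ψ) with Ψ(n,t) := T·conj(Φ(n,t)) satisfies the full matrix system with background r := δ·conj(q): Φ(n+1) = β(n)⁻¹(AΦ(n) + q(n)Ψ(n)), Ψ(n+1) = β(n)⁻¹(r(n)Φ(n) + A⁻¹Ψ(n)), 2∂ₜΦ(n) = (A² − A⁻² + (r(n)q(n−1) − q(n)r(n−1)))Φ(n) + 2(q(n)A + q(n−1)A⁻¹)Ψ(n),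 2∂ₜΨ(n) = 2(r(n−1)A + r(n)A⁻¹)Φ(n) + (A⁻² − A² − (r(n)q(n−1) − q(n)r(n−1)))Ψ(n). -/

import Mathlib

open Matrix

/-- The matrix Lax system (discrete spectral problem plus time evolution) with data
`(A, q, r, β)`. -/
def MatrixLaxSystem (N : ℕ) (A : Matrix (Fin N) (Fin N) ℂ) (q r β : ℤ × ℝ → ℂ)
    (Φ Ψ : ℤ × ℝ → Fin N → ℂ) : Prop :=
  (∀ (n : ℤ) (t : ℝ),
      Φ (n + 1, t) = (β (n, t))⁻¹ • (A.mulVec (Φ (n, t)) + q (n, t) • Ψ (n, t))) ∧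
  (∀ (n : ℤ) (t : ℝ),
      Ψ (n + 1, t) = (β (n, t))⁻¹ • (r (n, t) • Φ (n, t) + A⁻¹.mulVec (Ψ (n, t)))) ∧
  (∀ (n : ℤ) (t : ℝ),
      (fun i => 2 * deriv (fun u => Φ (n, u) i) t) =
        (A ^ 2 - A⁻¹ ^ 2).mulVec (Φ (n, t))
          + (r (n, t) * q (n - 1, t) - q (n, t) * r (n - 1, t)) • Φ (n, t)
          + (2 : ℂ) • (q (n, t) • A + q (n - 1, t) • A⁻¹).mulVec (Ψ (n, t))) ∧
  (∀ (n : ℤ) (t : ℝ),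
      (fun i => 2 * deriv (fun u => Ψ (n, u) i) t) =
        (2 : ℂ) • (r (n - 1, t) • A + r (n, t) • A⁻¹).mulVec (Φ (n, t))
          + (A⁻¹ ^ 2 - A ^ 2).mulVec (Ψ (n, t))
          - (r (n, t) * q (n - 1, t) - q (n, t) * r (n - 1, t)) • Ψ (n, t))

private lemma aux_star_mulVec {N : ℕ} (M : Matrix (Fin N) (Fin N) ℂ) (v : Fin N → ℂ) :
    star (M.mulVec v) = (M.map (starRingEnd ℂ)).mulVec (star v) := by
  funext i
  simp [Matrix.mulVec, dotProduct, Matrix.map_apply, map_sum]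

private lemma aux_inv_map {N : ℕ} (A : Matrix (Fin N) (Fin N) ℂ) (hA : IsUnit A.det) :
    (A.map (starRingEnd ℂ))⁻¹ = A⁻¹.map (starRingEnd ℂ) := by
  apply Matrix.inv_eq_left_inv
  rw [← Matrix.map_mul, Matrix.nonsing_inv_mul A hA]
  simp

private lemma aux_map_smul {N : ℕ} (a : ℂ) (M : Matrix (Fin N) (Fin N) ℂ) :
    (a • M).map (starRingEnd ℂ) = (starRingEnd ℂ a) • M.map (starRingEnd ℂ) := by
  ext i j; simp

/-- The verification of Section 4 (classical complex reduction): if `Φ` solves the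
reduced system and `Ψ := T·conj(Φ)` with `A⁻¹T = TA*`, `TT* = δI` and real nonvanishing
`β`, then `(Φ, Ψ)` solves the full matrix Lax system with background `r = δ·conj(q)`. -/
theorem reduced_system_gives_full_system_complex
    (N : ℕ) (hN : 1 ≤ N) (δ : ℂ) (hδ : δ = 1 ∨ δ = -1)
    (A T : Matrix (Fin N) (Fin N) ℂ)
    (hA : IsUnit A.det) (hT : IsUnit T.det)
    (hAT : A⁻¹ * T = T * A.map (starRingEnd ℂ))
    (hTT : T * T.map (starRingEnd ℂ) = δ • (1 : Matrix (Fin N) (Fin N) ℂ))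
    (q : ℤ × ℝ → ℂ) (β : ℤ × ℝ → ℝ)
    (hqd : ∀ (n : ℤ) (t : ℝ), DifferentiableAt ℝ (fun u => q (n, u)) t)
    (hβ0 : ∀ p : ℤ × ℝ, β p ≠ 0)
    (hβ2 : ∀ p : ℤ × ℝ, (β p : ℂ) ^ 2 = 1 - δ * (q p * starRingEnd ℂ (q p)))
    (Φ : ℤ × ℝ → Fin N → ℂ)
    (hΦd : ∀ (n : ℤ) (t : ℝ) (i : Fin N), DifferentiableAt ℝ (fun u => Φ (n, u) i) t)
    (hΦ1 : ∀ (n : ℤ) (t : ℝ),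
        Φ (n + 1, t) = ((β (n, t) : ℂ))⁻¹ • A.mulVec (Φ (n, t))
          + ((β (n, t) : ℂ))⁻¹ • q (n, t) • T.mulVec (star (Φ (n, t))))
    (hΦt : ∀ (n : ℤ) (t : ℝ),
        (fun i => 2 * deriv (fun u => Φ (n, u) i) t) =
          (A ^ 2 - A⁻¹ ^ 2).mulVec (Φ (n, t))
            + (-(δ * (q (n, t) * starRingEnd ℂ (q (n - 1, t))))
                + δ * (q (n - 1, t) * starRingEnd ℂ (q (n, t)))) • Φ (n, t)
            + (2 : ℂ) • (q (n, t) • A + q (n - 1, t) • A⁻¹).mulVec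
                (T.mulVec (star (Φ (n, t))))) :
    MatrixLaxSystem N A q (fun p => δ * starRingEnd ℂ (q p)) (fun p => (β p : ℂ)) Φ
      (fun p => T.mulVec (star (Φ p))) := by
  have hcδ : starRingEnd ℂ δ = δ := by rcases hδ with h | h <;> subst h <;> simp
  have hAc : IsUnit (A.map (starRingEnd ℂ)).det := by
    have hd : (A.map (starRingEnd ℂ)).det = starRingEnd ℂ A.det := by
      have he : A.map (starRingEnd ℂ) = Aᴴᵀ := by
        ext i j; simp [Matrix.conjTranspose_apply]
      rw [he, Matrix.det_transpose, Matrix.det_conjTranspose]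
      rfl
    rw [hd]; exact hA.map _
  have h1 : T * A.map (starRingEnd ℂ) = A⁻¹ * T := hAT.symm
  have h2 : T * A⁻¹.map (starRingEnd ℂ) = A * T := by
    rw [← aux_inv_map A hA]
    have hT2 : A * T * A.map (starRingEnd ℂ) = T := by
      rw [mul_assoc, h1, ← mul_assoc, Matrix.mul_nonsing_inv A hA, one_mul]
    calc T * (A.map (starRingEnd ℂ))⁻¹
        = A * T * (A.map (starRingEnd ℂ) * (A.map (starRingEnd ℂ))⁻¹) := by
          rw [← mul_assoc, hT2]
      _ = A * T := by rw [Matrix.mul_nonsing_inv _ hAc, mul_one]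
  refine ⟨fun n t => ?_, fun n t => ?_, fun n t => ?_, fun n t => ?_⟩
  · beta_reduce
    rw [hΦ1 n t, smul_add]
  · beta_reduce
    rw [hΦ1 n t, star_add, star_smul, star_smul, star_smul, aux_star_mulVec,
      aux_star_mulVec, star_star, Matrix.mulVec_add, Matrix.mulVec_smul,
      Matrix.mulVec_smul, Matrix.mulVec_smul, Matrix.mulVec_mulVec,
      Matrix.mulVec_mulVec, h1, hTT, Matrix.smul_mulVec, Matrix.one_mulVec,
      ← Matrix.mulVec_mulVec]
    simp only [Complex.star_def, map_inv₀, Complex.conj_ofReal]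
    module
  · beta_reduce
    rw [hΦt n t]
    congr 2
    ring
  · beta_reduce
    have hL : (fun i => 2 * deriv (fun u => T.mulVec (star (Φ (n, u))) i) t)
        = T.mulVec (star (fun i => 2 * deriv (fun u => Φ (n, u) i) t)) := by
      funext i
      have h3 : (fun u => T.mulVec (star (Φ (n, u))) i)
          = fun u => ∑ j, T i j * star (Φ (n, u) j) := by
        funext u; simp [Matrix.mulVec, dotProduct]
      have h4 : HasDerivAt (fun u => ∑ j, T i j * star (Φ (n, u) j))
          (∑ j, T i j * star (deriv (fun u => Φ (n, u) j) t)) t :=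
        HasDerivAt.fun_sum fun j _ => (((hΦd n t j).hasDerivAt).star).const_mul _
      rw [h3, h4.deriv]
      simp only [Matrix.mulVec, dotProduct, Pi.star_apply, Finset.mul_sum]
      refine Finset.sum_congr rfl fun j _ => ?_
      rw [star_mul']
      have h5 : star (2 : ℂ) = 2 := by norm_num
      rw [h5]
      ring
    have key : ∀ B C : Matrix (Fin N) (Fin N) ℂ, T * B = C * T →
        T * B * T.map (starRingEnd ℂ) = δ • C := by
      intro B C h
      rw [h, mul_assoc, hTT, Matrix.mul_smul, mul_one]
    have e1 := key _ _ h1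
    have e2 := key _ _ h2
    have hmap2 : (A ^ 2 - A⁻¹ ^ 2).map (starRingEnd ℂ)
        = A.map (starRingEnd ℂ) ^ 2 - A⁻¹.map (starRingEnd ℂ) ^ 2 := by
      ext i j
      simp [Matrix.map_apply, Matrix.sub_apply, pow_two, Matrix.mul_apply, map_sum]
    have hmap3 : (q (n, t) • A + q (n - 1, t) • A⁻¹).map (starRingEnd ℂ)
        = starRingEnd ℂ (q (n, t)) • A.map (starRingEnd ℂ)
          + starRingEnd ℂ (q (n - 1, t)) • A⁻¹.map (starRingEnd ℂ) := by
      ext i j; simp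
    have hTsq : T * (A.map (starRingEnd ℂ) ^ 2 - A⁻¹.map (starRingEnd ℂ) ^ 2)
        = (A⁻¹ ^ 2 - A ^ 2) * T := by
      have hx : T * (A.map (starRingEnd ℂ) * A.map (starRingEnd ℂ)) = A⁻¹ * A⁻¹ * T := by
        rw [← mul_assoc, h1, mul_assoc, h1, ← mul_assoc]
      have hy : T * (A⁻¹.map (starRingEnd ℂ) * A⁻¹.map (starRingEnd ℂ)) = A * A * T := by
        rw [← mul_assoc, h2, mul_assoc, h2, ← mul_assoc]
      rw [mul_sub, sub_mul, pow_two, pow_two, pow_two, pow_two, hx, hy]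
    have e3 : T * (starRingEnd ℂ (q (n, t)) • A.map (starRingEnd ℂ)
          + starRingEnd ℂ (q (n - 1, t)) • A⁻¹.map (starRingEnd ℂ)) * T.map (starRingEnd ℂ)
        = (δ * starRingEnd ℂ (q (n - 1, t))) • A + (δ * starRingEnd ℂ (q (n, t))) • A⁻¹ := by
      simp only [mul_add, add_mul, Matrix.mul_smul, Matrix.smul_mul, e1, e2]
      module
    have hs : starRingEnd ℂ (-(δ * (q (n, t) * starRingEnd ℂ (q (n - 1, t))))
          + δ * (q (n - 1, t) * starRingEnd ℂ (q (n, t))))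
        = -(δ * starRingEnd ℂ (q (n, t)) * q (n - 1, t)
            - q (n, t) * (δ * starRingEnd ℂ (q (n - 1, t)))) := by
      simp only [map_add, map_neg, _root_.map_mul, hcδ, Complex.conj_conj]
      ring
    have h5 : star (2 : ℂ) = 2 := by norm_num
    rw [hL, hΦt n t, star_add, star_add, star_smul, star_smul, aux_star_mulVec,
      aux_star_mulVec, aux_star_mulVec, star_star, h5]
    simp only [Complex.star_def]
    rw [hs, Matrix.mulVec_add, Matrix.mulVec_add, Matrix.mulVec_smul, Matrix.mulVec_smul,
      Matrix.mulVec_mulVec, Matrix.mulVec_mulVec, Matrix.mulVec_mulVec,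
      hmap2, hmap3, hTsq, e3, ← Matrix.mulVec_mulVec]
    module
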